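/- Let (∇_i)_{i∈I} be a finite family of lattice polyhedra in ℝʳ, all with the same tail cone C₀, such that ∇ := ⋃_{i∈I} ∇_i is a lattice polyhedron with tail cone C₀ and every nonempty intersection ∇_{I'} := ⋂_{i∈I'} ∇_i (∅ ≠ I' ⊆ I) is a lattice polyhedron with tail cone C₀; define F(∅) := ∇ and F(I') := ∇_{I'}. Then for every convex cone C ⊆ ℝʳ generated with nonnegative real coefficients by a finite subset of ℤʳ, and for every m ∈ ℝʳ, the evaluation subcomplex C^{F^C}_•(m) of the contravariant functor F^C(I') := F(I') + C (Minkowski sum) is exact. -/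

import Mathlib

set_option linter.unusedSectionVars false


open Pointwise

noncomputable section

variable {I : Type*} [Fintype I] [LinearOrder I]

/-- The basis vector `e_J` of the Koszul complex `⋀^• ℂ^I`, indexed by the subset
`J = {i_0 < ⋯ < i_{p-1}} ⊆ I`.  The total space of the Koszul complex is modelled as
`Finset I → ℂ`, with `⋀^p ℂ^I` the span of the `e_J` with `J.card = p`. -/
def eVec (J : Finset I) : Finset I → ℂ := fun K => if K = J then 1 else 0

/-- The Koszul differential: `d (e_{I'}) = ∑_j (-1)^j e_{I' \ {i_j}}` for
`I' = {i_0 < ⋯ < i_p}`. -/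
def koszulD : (Finset I → ℂ) →ₗ[ℂ] (Finset I → ℂ) where
  toFun f := fun J => ∑ i ∈ Jᶜ, (-1 : ℂ) ^ (J.filter (· < i)).card * f (insert i J)
  map_add' f g := by
    funext J
    simp [mul_add, Finset.sum_add_distrib]
  map_smul' c f := by
    funext J
    simp only [Pi.smul_apply, smul_eq_mul, RingHom.id_apply, Finset.mul_sum]
    exact Finset.sum_congr rfl fun i _ => by ring

/-- The degree-`p` part of the evaluation subcomplex `C^G_•(m)`:
the span of the `e_{I'}` with `#I' = p` and `m ∈ G(I')`. -/
def evalC {α : Type*} (F : Finset I → Set α) (m : α) (p : ℕ) :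
    Submodule ℂ (Finset I → ℂ) :=
  Submodule.span ℂ {v | ∃ J : Finset I, J.card = p ∧ m ∈ F J ∧ v = eVec J}

/-- Exactness of the evaluation subcomplex `C^G_•(m)`: its homology vanishes in every
degree `p ≥ 0`. -/
def evalExact {α : Type*} (F : Finset I → Set α) (m : α) : Prop :=
  ∀ p : ℕ, ∀ x ∈ evalC F m p, koszulD x = 0 →
    ∃ y ∈ evalC F m (p + 1), koszulD y = x

/-- The contravariant functor associated to a family `(∇_i)_{i ∈ I}` of subsets:
`F(∅) = ⋃_i ∇_i` and `F(I') = ⋂_{i ∈ I'} ∇_i` for nonempty `I' ⊆ I`. -/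
def familyFunctor {α : Type*} (nab : I → Set α) (J : Finset I) : Set α :=
  if J = ∅ then ⋃ i, nab i else ⋂ i ∈ J, nab i

/-- The canonical inclusion of the standard lattice `ℤʳ` into `ℝʳ`. -/
def intVec {r : ℕ} (v : Fin r → ℤ) : Fin r → ℝ := fun i => (v i : ℝ)

/-- The convex cone generated with nonnegative real coefficients by the finite set
`G` of lattice points of `ℤʳ`. -/
def latticeCone {r : ℕ} (G : Finset (Fin r → ℤ)) : Set (Fin r → ℝ) :=
  {x | ∃ c : (Fin r → ℤ) → ℝ, (∀ g, 0 ≤ c g) ∧ x = ∑ g ∈ G, c g • intVec g}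

/-- `A ⊆ ℝʳ` is a lattice polyhedron with tail cone `latticeCone G`:
the Minkowski sum of the convex hull of a finite nonempty set of lattice points
and the cone `latticeCone G`. -/
def IsLatticePolyhedron {r : ℕ} (G : Finset (Fin r → ℤ)) (A : Set (Fin r → ℝ)) : Prop :=
  ∃ S : Finset (Fin r → ℤ), S.Nonempty ∧ A = convexHull ℝ (intVec '' ↑S) + latticeCone G

def CC (𝒜 : Finset I → Prop) (p : ℕ) : Submodule ℂ (Finset I → ℂ) :=
  Submodule.span ℂ {v | ∃ J : Finset I, J.card = p ∧ 𝒜 J ∧ v = eVec J}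

def AEx (𝒜 : Finset I → Prop) : Prop :=
  ∀ p : ℕ, ∀ x ∈ CC 𝒜 p, koszulD x = 0 → ∃ y ∈ CC 𝒜 (p+1), koszulD y = x

lemma basis_expand (x : Finset I → ℂ) :
    x = ∑ K : Finset I, x K • eVec K := by
  funext L
  rw [Finset.sum_apply]
  have : ∀ K : Finset I, (x K • eVec K) L = if L = K then x K else 0 := by
    intro K
    simp [eVec, mul_ite]
  simp only [this, Finset.sum_ite_eq, Finset.mem_univ, if_true]

lemma mem_CC {𝒜 : Finset I → Prop} {p : ℕ} {x : Finset I → ℂ} :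
    x ∈ CC 𝒜 p ↔ ∀ K, x K ≠ 0 → K.card = p ∧ 𝒜 K := by
  classical
  constructor
  · intro hx
    let M : Submodule ℂ (Finset I → ℂ) :=
      { carrier := {y | ∀ K, y K ≠ 0 → K.card = p ∧ 𝒜 K}
        add_mem' := by
          intro a b ha hb K hK
          by_cases h : a K ≠ 0
          · exact ha K h
          · push_neg at h
            exact hb K (by simpa [h] using hK)
        zero_mem' := by intro K hK; simp at hK
        smul_mem' := by
          intro c a ha K hK
          exact ha K (by intro h; simp [h] at hK) }
    have : CC 𝒜 p ≤ M := by
      apply Submodule.span_le.2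
      rintro v ⟨J, hJ, hA, rfl⟩ K hK
      have : K = J := by by_contra h; simp [eVec, h] at hK
      subst this; exact ⟨hJ, hA⟩
    exact this hx
  · intro h
    rw [basis_expand x]
    apply Submodule.sum_mem
    intro K _
    by_cases hK : x K = 0
    · simp [hK]
    · exact Submodule.smul_mem _ _ (Submodule.subset_span ⟨K, (h K hK).1, (h K hK).2, rfl⟩)

lemma koszulD_apply (x : Finset I → ℂ) (J : Finset I) :
    koszulD x J = ∑ i ∈ Jᶜ, (-1 : ℂ) ^ (J.filter (· < i)).card * x (insert i J) := rfl

lemma koszulD_deg0 {𝒜 : Finset I → Prop} {x : Finset I → ℂ} (hx : x ∈ CC 𝒜 0) :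
    koszulD x = 0 := by
  rw [mem_CC] at hx
  funext J
  rw [koszulD_apply]
  apply Finset.sum_eq_zero
  intro i hi
  have : x (insert i J) = 0 := by
    by_contra h
    have := (hx _ h).1
    simp [Finset.card_insert_of_notMem (by simpa using hi)] at this
  simp [this]

lemma sign_insert_lt {J : Finset I} {i j : I} (hi : i ∉ J) (hij : i < j) :
    ((insert i J).filter (· < j)).card = (J.filter (· < j)).card + 1 := by
  rw [Finset.filter_insert, if_pos hij,
    Finset.card_insert_of_notMem (by simp [hi])]

lemma sign_insert_ge {J : Finset I} {i j : I} (hij : ¬ i < j) :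
    ((insert i J).filter (· < j)).card = (J.filter (· < j)).card := by
  rw [Finset.filter_insert, if_neg hij]

lemma koszulD_koszulD (x : Finset I → ℂ) : koszulD (koszulD x) = 0 := by
  classical
  funext J
  rw [koszulD_apply]
  simp only [koszulD_apply, Finset.mul_sum]
  -- rewrite inner index set
  have hins : ∀ i : I, (insert i J)ᶜ = Jᶜ.erase i := by
    intro i; ext a; simp [Finset.mem_compl, Finset.mem_erase, not_or, and_comm]
  set f : I → I → ℂ := fun i j =>
    (-1 : ℂ) ^ (J.filter (· < i)).card *
      ((-1 : ℂ) ^ ((insert i J).filter (· < j)).card * x (insert j (insert i J))) with hf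
  have key : ∀ i ∈ Jᶜ, ∀ j ∈ Jᶜ, i ≠ j → f i j = - f j i := by
    intro i hi j hj hij
    have hiJ : i ∉ J := by simpa using hi
    have hjJ : j ∉ J := by simpa using hj
    have hcomm : insert j (insert i J) = insert i (insert j J) := by
      ext a; simp only [Finset.mem_insert]; tauto
    rcases lt_or_gt_of_ne hij with h | h
    · rw [hf]; dsimp only
      rw [sign_insert_lt hiJ h, sign_insert_ge (not_lt.2 h.le), hcomm, pow_succ]
      ring
    · rw [hf]; dsimp only
      rw [sign_insert_ge (not_lt.2 h.le), sign_insert_lt hjJ h, hcomm, pow_succ]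
      ring
  have : ∑ i ∈ Jᶜ, ∑ j ∈ (insert i J)ᶜ,
      (-1 : ℂ) ^ (J.filter (· < i)).card *
        ((-1 : ℂ) ^ ((insert i J).filter (· < j)).card * x (insert j (insert i J)))
      = ∑ i ∈ Jᶜ, ∑ j ∈ Jᶜ, if j ≠ i then f i j else 0 := by
    apply Finset.sum_congr rfl
    intro i _
    rw [hins i, ← Finset.sum_filter]
    apply Finset.sum_congr
    · ext a; simp [Finset.mem_erase, Finset.mem_filter, and_comm]
    · intros; rfl
  rw [this]
  have hanti : ∀ i ∈ Jᶜ, ∀ j ∈ Jᶜ,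
      (if j ≠ i then f i j else 0) = - (if i ≠ j then f j i else 0) := by
    intro i hi j hj
    by_cases h : i = j
    · subst h; simp
    · rw [if_pos (Ne.symm h), if_pos h, key i hi j hj h]
  have hS : ∑ i ∈ Jᶜ, ∑ j ∈ Jᶜ, (if j ≠ i then f i j else 0)
      = - ∑ i ∈ Jᶜ, ∑ j ∈ Jᶜ, (if j ≠ i then f i j else 0) := by
    conv_lhs => rw [Finset.sum_comm]
    rw [← Finset.sum_neg_distrib]
    apply Finset.sum_congr rfl
    intro j hj
    rw [← Finset.sum_neg_distrib]
    apply Finset.sum_congr rfl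
    intro i hi
    exact hanti i hi j hj
  have h2 : (2:ℂ) * (∑ i ∈ Jᶜ, ∑ j ∈ Jᶜ, (if j ≠ i then f i j else 0)) = 0 := by
    linear_combination hS
  have := mul_eq_zero.1 h2
  simpa using this


set_option linter.unusedSectionVars false
section BPart
variable {I : Type*} [Fintype I] [LinearOrder I]

lemma AEx_congr {𝒜 ℬ : Finset I → Prop} (h : ∀ J, 𝒜 J ↔ ℬ J) (hA : AEx 𝒜) : AEx ℬ := by
  have : 𝒜 = ℬ := funext fun J => propext (h J)
  rwa [← this]

lemma AEx_false : AEx (fun _ : Finset I => False) := by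
  intro p x hx _
  have : x = 0 := by
    funext K
    by_contra h
    exact (mem_CC.1 hx K h).2
  refine ⟨0, zero_mem _, ?_⟩
  rw [map_zero, this]

lemma koszulD_support {x : Finset I → ℂ} {K : Finset I} (h : koszulD x K ≠ 0) :
    ∃ i ∈ Kᶜ, x (insert i K) ≠ 0 := by
  by_contra hc
  push_neg at hc
  rw [koszulD_apply] at h
  exact h (Finset.sum_eq_zero fun i hi => by rw [hc i hi, mul_zero])

lemma filter_lt_min_eq_empty {T J : Finset I} {i₀ : I} (hmin : ∀ i ∈ T, i₀ ≤ i)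
    (hJT : J ⊆ T) : (J.filter (· < i₀)) = ∅ := by
  apply Finset.filter_eq_empty_iff.2
  intro a ha
  exact not_lt.2 (hmin a (hJT ha))

lemma AEx_simplex (T : Finset I) (hT : T.Nonempty) : AEx (fun J => J ⊆ T) := by
  classical
  set i₀ := T.min' hT with hi₀
  have hi₀T : i₀ ∈ T := T.min'_mem hT
  have hmin : ∀ i ∈ T, i₀ ≤ i := fun i hi => T.min'_le i hi
  intro p x hx hdx
  have xs := mem_CC.1 hx
  set y : Finset I → ℂ := fun K => if i₀ ∈ K then x (K.erase i₀) else 0 with hy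
  have hymem : y ∈ CC (fun J => J ⊆ T) (p + 1) := by
    rw [mem_CC]
    intro K hK
    have hiK : i₀ ∈ K := by
      by_contra h; rw [hy] at hK; simp [h] at hK
    have hxK : x (K.erase i₀) ≠ 0 := by
      rw [hy] at hK; simpa [hiK] using hK
    obtain ⟨hcard, hsub⟩ := xs _ hxK
    constructor
    · have := Finset.card_erase_of_mem hiK
      have hKpos : 0 < K.card := Finset.card_pos.2 ⟨i₀, hiK⟩
      omega
    · intro a ha
      by_cases h : a = i₀
      · rwa [h]
      · exact hsub (Finset.mem_erase.2 ⟨h, ha⟩)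
  refine ⟨y, hymem, ?_⟩
  funext J
  rw [koszulD_apply]
  by_cases hJ : i₀ ∈ J
  · set J' := J.erase i₀ with hJ'
    have hins : insert i₀ J' = J := Finset.insert_erase hJ
    have hi₀J' : i₀ ∉ J' := Finset.notMem_erase _ _
    have hterm : ∀ i ∈ Jᶜ, (-1:ℂ) ^ (J.filter (· < i)).card * y (insert i J)
        = - ((-1:ℂ) ^ (J'.filter (· < i)).card * x (insert i J')) := by
      intro i hi
      have hiJ : i ∉ J := by simpa using hi
      have hii₀ : i ≠ i₀ := fun h => hiJ (h ▸ hJ)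
      have h1 : y (insert i J) = x (insert i J') := by
        rw [hy]
        have hmem : i₀ ∈ insert i J := Finset.mem_insert_of_mem hJ
        simp only [if_pos hmem]
        rw [Finset.erase_insert_of_ne hii₀]
      rw [h1]
      by_cases hxi : x (insert i J') = 0
      · rw [hxi, mul_zero, mul_zero, neg_zero]
      · obtain ⟨_, hsub⟩ := xs _ hxi
        have hiT : i ∈ T := hsub (Finset.mem_insert_self _ _)
        have hlt : i₀ < i := lt_of_le_of_ne (hmin i hiT) (Ne.symm hii₀)
        have hcard : (J.filter (· < i)).card = (J'.filter (· < i)).card + 1 := by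
          conv_lhs => rw [← hins]
          exact sign_insert_lt hi₀J' hlt
        rw [hcard, pow_succ]
        ring
    rw [Finset.sum_congr rfl hterm, Finset.sum_neg_distrib]
    have hcompl : J'ᶜ = insert i₀ Jᶜ := by
      ext a
      simp only [hJ', Finset.mem_compl, Finset.mem_erase, Finset.mem_insert, not_and_or, not_not]
    have hdxJ' : (0:ℂ) = (-1:ℂ) ^ (J'.filter (· < i₀)).card * x (insert i₀ J')
        + ∑ i ∈ Jᶜ, (-1:ℂ) ^ (J'.filter (· < i)).card * x (insert i J') := by
      have h0 := congrFun hdx J'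
      rw [koszulD_apply] at h0
      simp only [Pi.zero_apply] at h0
      have h1 := h0.symm
      rw [hcompl, Finset.sum_insert (by simp [hJ])] at h1
      exact h1
    have hsum : ∑ i ∈ Jᶜ, (-1:ℂ) ^ (J'.filter (· < i)).card * x (insert i J')
        = - ((-1:ℂ) ^ (J'.filter (· < i₀)).card * x (insert i₀ J')) := by
      linear_combination -hdxJ'
    rw [hsum, neg_neg, hins]
    by_cases hxJ : x J = 0
    · rw [hxJ, mul_zero]
    · have hJT : J ⊆ T := (xs _ hxJ).2
      have : (J'.filter (· < i₀)) = ∅ :=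
        filter_lt_min_eq_empty hmin (fun a ha => hJT (Finset.mem_of_mem_erase ha))
      rw [this]
      simp
  · have hi₀c : i₀ ∈ Jᶜ := by simpa using hJ
    rw [Finset.sum_eq_single_of_mem i₀ hi₀c (fun i _ hii₀ => by
      have : i₀ ∉ insert i J := by
        simp only [Finset.mem_insert]
        rintro (h | h)
        · exact hii₀ (h.symm)
        · exact hJ h
      rw [hy]; simp only [if_neg this, mul_zero])]
    have : y (insert i₀ J) = x J := by
      rw [hy]
      simp only [Finset.mem_insert_self, if_pos]
      rw [Finset.erase_insert hJ]
    rw [this]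
    by_cases hxJ : x J = 0
    · rw [hxJ, mul_zero]
    · have hJT : J ⊆ T := (xs _ hxJ).2
      rw [filter_lt_min_eq_empty hmin hJT]
      simp

end BPart


section CPart
variable {I : Type*} [Fintype I] [LinearOrder I]

def DCl (𝒜 : Finset I → Prop) : Prop := ∀ J i, 𝒜 J → i ∈ J → 𝒜 (J.erase i)

lemma CC_mono {𝒜 ℬ : Finset I → Prop} (h : ∀ J, 𝒜 J → ℬ J) (p : ℕ) :
    CC 𝒜 p ≤ CC ℬ p := by
  apply Submodule.span_mono
  rintro v ⟨J, h1, h2, rfl⟩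
  exact ⟨J, h1, h J h2, rfl⟩

lemma koszulD_mem_CC {𝒜 : Finset I → Prop} (hD : DCl 𝒜) {p : ℕ} {x : Finset I → ℂ}
    (hx : x ∈ CC 𝒜 (p + 1)) : koszulD x ∈ CC 𝒜 p := by
  rw [mem_CC] at hx ⊢
  intro K hK
  obtain ⟨i, hi, hxi⟩ := koszulD_support hK
  have hiK : i ∉ K := by simpa using hi
  obtain ⟨hcard, hA⟩ := hx _ hxi
  rw [Finset.card_insert_of_notMem hiK] at hcard
  have h2 := hD _ i hA (Finset.mem_insert_self _ _)
  rw [Finset.erase_insert hiK] at h2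
  exact ⟨by omega, h2⟩

lemma AEx_union {𝒜 ℬ : Finset I → Prop} (hDA : DCl 𝒜) (hDB : DCl ℬ)
    (hA : AEx 𝒜) (hB : AEx ℬ) (hAB : AEx (fun J => 𝒜 J ∧ ℬ J)) :
    AEx (fun J => 𝒜 J ∨ ℬ J) := by
  classical
  intro p x hx hdx
  have hxs := mem_CC.1 hx
  set b : Finset I → ℂ := fun K => if 𝒜 K then x K else 0 with hb
  set c : Finset I → ℂ := x - b with hc
  have hbmem : b ∈ CC 𝒜 p := by
    rw [mem_CC]
    intro K hK
    rw [hb] at hK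
    by_cases h : 𝒜 K
    · exact ⟨(hxs K (by simpa [h] using hK)).1, h⟩
    · simp [h] at hK
  have hcmem : c ∈ CC ℬ p := by
    rw [mem_CC]
    intro K hK
    rw [hc, hb] at hK
    by_cases h : 𝒜 K
    · simp [h] at hK
    · have hxK : x K ≠ 0 := by simpa [h] using hK
      rcases hxs K hxK with ⟨h1, h2 | h2⟩
      · exact absurd h2 h
      · exact ⟨h1, h2⟩
  have hbc : x = b + c := by rw [hc]; ring
  have hdbc : koszulD b = - koszulD c := by
    have : koszulD b + koszulD c = 0 := by
      rw [← map_add, ← hbc, hdx]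
    linear_combination this
  obtain ⟨w, hwmem, hdw⟩ : ∃ w ∈ CC (fun J => 𝒜 J ∧ ℬ J) p, koszulD w = koszulD b := by
    cases p with
    | zero => exact ⟨0, zero_mem _, by rw [map_zero, koszulD_deg0 hbmem]⟩
    | succ q =>
      have hdbA : koszulD b ∈ CC 𝒜 q := koszulD_mem_CC hDA hbmem
      have hdbB : koszulD b ∈ CC ℬ q := by
        rw [hdbc]
        exact neg_mem (koszulD_mem_CC hDB hcmem)
      have : koszulD b ∈ CC (fun J => 𝒜 J ∧ ℬ J) q := by
        rw [mem_CC] at hdbA hdbB ⊢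
        intro K hK
        exact ⟨(hdbA K hK).1, (hdbA K hK).2, (hdbB K hK).2⟩
      exact hAB q _ this (koszulD_koszulD b)
  have h1 : b - w ∈ CC 𝒜 p := sub_mem hbmem (CC_mono (fun J h => h.1) p hwmem)
  have hd1 : koszulD (b - w) = 0 := by rw [map_sub, hdw, sub_self]
  obtain ⟨β, hβ, hdβ⟩ := hA p _ h1 hd1
  have h2 : c + w ∈ CC ℬ p := add_mem hcmem (CC_mono (fun J h => h.2) p hwmem)
  have hd2 : koszulD (c + w) = 0 := by
    rw [map_add, hdw, hdbc]
    ring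
  obtain ⟨γ, hγ, hdγ⟩ := hB p _ h2 hd2
  refine ⟨β + γ, add_mem ((CC_mono (fun J h => Or.inl h) _) hβ)
    ((CC_mono (fun J h => Or.inr h) _) hγ), ?_⟩
  rw [map_add, hdβ, hdγ, hbc]
  ring

lemma AEx_chain {P : ℝ → Finset I → Prop}
    (hglob3 : ∀ a b c J, a ≤ b → b ≤ c → P a J → P c J → P b J) :
    ∀ l : List ℝ, l.Pairwise (· ≤ ·) →
    (∀ t ∈ l, AEx (P t)) → (∀ t ∈ l, DCl (P t)) →
    l.Chain' (fun a b => AEx (fun J => P a J ∧ P b J)) →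
    AEx (fun J => ∃ t ∈ l, P t J) := by
  intro l
  induction l with
  | nil =>
    intro _ _ _ _
    exact AEx_congr (by simp) AEx_false
  | cons a l ih =>
    intro hsort hAEx hDCl hchain
    rcases l with _ | ⟨b, l⟩
    · exact AEx_congr (by intro J; simp) (hAEx a (by simp))
    · have hsort' : (b :: l).Pairwise (· ≤ ·) := (List.pairwise_cons.1 hsort).2
      have hle : ∀ t ∈ b :: l, a ≤ t := (List.pairwise_cons.1 hsort).1
      have hble : ∀ t ∈ l, b ≤ t := (List.pairwise_cons.1 hsort').1
      have hbt : ∀ t ∈ b :: l, b ≤ t := by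
        intro t ht
        rcases List.mem_cons.1 ht with h | h
        · exact h ▸ le_refl b
        · exact hble t h
      have hU' : AEx (fun J => ∃ t ∈ b :: l, P t J) :=
        ih hsort' (fun t ht => hAEx t (List.mem_cons_of_mem a ht))
          (fun t ht => hDCl t (List.mem_cons_of_mem a ht)) hchain.tail
      have hhead : AEx (fun J => P a J ∧ P b J) := (List.isChain_cons_cons.1 hchain).1
      have hint : AEx (fun J => P a J ∧ ∃ t ∈ b :: l, P t J) := by
        apply AEx_congr ?_ hhead
        intro J
        constructor
        · rintro ⟨h1, h2⟩
          exact ⟨h1, b, List.mem_cons_self, h2⟩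
        · rintro ⟨h1, t, ht, h2⟩
          exact ⟨h1, hglob3 a b t J (hle b (List.mem_cons_self)) (hbt t ht) h1 h2⟩
      have hDU : DCl (fun J => ∃ t ∈ b :: l, P t J) := by
        rintro J i ⟨t, ht, h⟩ hi
        exact ⟨t, ht, hDCl t (List.mem_cons_of_mem a ht) J i h hi⟩
      have := AEx_union (hDCl a (List.mem_cons_self)) hDU
        (hAEx a (List.mem_cons_self)) hU' hint
      apply AEx_congr ?_ this
      intro J
      simp only [List.mem_cons]
      constructor
      · rintro (h | ⟨t, ht, h⟩)
        · exact ⟨a, Or.inl rfl, h⟩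
        · exact ⟨t, Or.inr ht, h⟩
      · rintro ⟨t, (rfl | ht), h⟩
        · exact Or.inl h
        · exact Or.inr ⟨t, ht, h⟩
end CPart


section DPart
variable {r : ℕ}

lemma latticeCone_mono {A B : Finset (Fin r → ℤ)} (h : A ⊆ B) :
    latticeCone A ⊆ latticeCone B := by
  classical
  rintro x ⟨c, hc, rfl⟩
  refine ⟨fun g => if g ∈ A then c g else 0, fun g => ?_, ?_⟩
  · dsimp only
    split_ifs with hg
    · exact hc g
    · exact le_rfl
  · have hco : ∀ g ∈ B, (if g ∈ A then c g else 0) • intVec g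
        = if g ∈ A then c g • intVec g else 0 := by
      intro g _
      split_ifs
      · rfl
      · rw [zero_smul]
    dsimp only
    rw [Finset.sum_congr rfl hco, Finset.sum_ite_mem, Finset.inter_eq_right.2 h]

lemma zero_mem_latticeCone (G : Finset (Fin r → ℤ)) : (0 : Fin r → ℝ) ∈ latticeCone G :=
  ⟨0, fun g => le_refl 0, by simp⟩

lemma convex_latticeCone (G : Finset (Fin r → ℤ)) : Convex ℝ (latticeCone G) := by
  rintro x ⟨c, hc, rfl⟩ y ⟨d, hd, rfl⟩ a b ha hb _
  refine ⟨fun g => a * c g + b * d g, fun g =>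
    add_nonneg (mul_nonneg ha (hc g)) (mul_nonneg hb (hd g)), ?_⟩
  dsimp only
  rw [Finset.smul_sum, Finset.smul_sum, ← Finset.sum_add_distrib]
  apply Finset.sum_congr rfl
  intro g _
  rw [smul_smul, smul_smul, ← add_smul]

lemma isClosed_latticeCone (G : Finset (Fin r → ℤ)) : IsClosed (latticeCone G) := by
  classical
  induction G using Finset.strongInductionOn with
  | _ G ih =>
    by_cases hLI : LinearIndependent ℝ (fun g : ↥G => intVec (g : Fin r → ℤ))
    · set L : ((↥G) → ℝ) →ₗ[ℝ] (Fin r → ℝ) :=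
        { toFun := fun c => ∑ g : ↥G, c g • intVec (g : Fin r → ℤ)
          map_add' := by
            intro c d
            rw [← Finset.sum_add_distrib]
            exact Finset.sum_congr rfl fun g _ => by rw [Pi.add_apply, add_smul]
          map_smul' := by
            intro m c
            rw [RingHom.id_apply, Finset.smul_sum]
            exact Finset.sum_congr rfl fun g _ => by
              rw [Pi.smul_apply, smul_smul, smul_eq_mul] } with hL
      have hinj : LinearMap.ker L = ⊥ := by
        rw [LinearMap.ker_eq_bot']
        intro c hc
        funext g
        exact Fintype.linearIndependent_iff.1 hLI c hc g
      have hemb := LinearMap.isClosedEmbedding_of_injective hinj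
      have horth : IsClosed {c : (↥G) → ℝ | ∀ g, 0 ≤ c g} := by
        have he : {c : (↥G) → ℝ | ∀ g, 0 ≤ c g} = ⋂ g, {c | 0 ≤ c g} := by
          ext c; simp [Set.mem_iInter]
        rw [he]
        exact isClosed_iInter fun g => isClosed_le continuous_const (continuous_apply g)
      have himg : latticeCone G = L '' {c | ∀ g, 0 ≤ c g} := by
        ext x
        constructor
        · rintro ⟨c, hc, rfl⟩
          refine ⟨fun g => c (g : Fin r → ℤ), fun g => hc _, ?_⟩
          show ∑ g : ↥G, c (g : Fin r → ℤ) • intVec (g : Fin r → ℤ) = ∑ g ∈ G, c g • intVec g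
          rw [← Finset.sum_coe_sort G (fun g => c g • intVec g)]
        · rintro ⟨c, hc, rfl⟩
          refine ⟨fun g => if h : g ∈ G then c ⟨g, h⟩ else 0, fun g => ?_, ?_⟩
          · by_cases h : g ∈ G
            · simp only [dif_pos h]; exact hc _
            · simp [h]
          · show ∑ g : ↥G, c g • intVec (g : Fin r → ℤ)
              = ∑ g ∈ G, (fun g => if h : g ∈ G then c ⟨g, h⟩ else 0) g • intVec g
            dsimp only
            rw [← Finset.sum_coe_sort G (fun g => (if h : g ∈ G then c ⟨g, h⟩ else 0) • intVec g)]
            exact (Finset.sum_congr rfl fun g _ => by rw [dif_pos g.2]).symm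
      rw [himg]
      exact hemb.isClosedMap _ horth
    · obtain ⟨cdep, hsum, g1, hg1⟩ := Fintype.not_linearIndependent_iff.1 hLI
      have hrel : ∃ lam : (Fin r → ℤ) → ℝ, (∑ g ∈ G, lam g • intVec g = 0) ∧
          ∃ g ∈ G, 0 < lam g := by
        set lam₀ : (Fin r → ℤ) → ℝ := fun g => if h : g ∈ G then cdep ⟨g, h⟩ else 0 with hlam₀
        have hsum₀ : ∑ g ∈ G, lam₀ g • intVec g = 0 := by
          rw [← Finset.sum_coe_sort G (fun g => lam₀ g • intVec g), ← hsum]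
          exact Finset.sum_congr rfl fun g _ => by
            congr 1
            simp only [hlam₀]
            rw [dif_pos g.2]
        have hsumneg : ∑ g ∈ G, (-lam₀ g) • intVec g = 0 := by
          have : ∑ g ∈ G, (-lam₀ g) • intVec g = - ∑ g ∈ G, lam₀ g • intVec g := by
            rw [← Finset.sum_neg_distrib]
            exact Finset.sum_congr rfl fun g _ => by rw [neg_smul]
          rw [this, hsum₀, neg_zero]
        have hlamg1 : lam₀ (g1 : Fin r → ℤ) = cdep g1 := by
          simp only [hlam₀]
          rw [dif_pos g1.2]
        by_cases hpos : ∃ g ∈ G, 0 < lam₀ g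
        · obtain ⟨g, hgG, hg⟩ := hpos
          exact ⟨lam₀, hsum₀, g, hgG, hg⟩
        · push_neg at hpos
          refine ⟨fun g => -lam₀ g, hsumneg, (g1 : Fin r → ℤ), g1.2, ?_⟩
          have h2 : lam₀ (g1 : Fin r → ℤ) ≤ 0 := hpos _ g1.2
          have h3 : lam₀ (g1 : Fin r → ℤ) ≠ 0 := by rw [hlamg1]; exact hg1
          have h4 : 0 < -lam₀ (g1 : Fin r → ℤ) := by
            cases lt_or_eq_of_le h2 with
            | inl h => linarith
            | inr h => exact absurd h h3
          simpa using h4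
      obtain ⟨lam, hlsum, glam, hglam, hlampos⟩ := hrel
      have hsubset : latticeCone G ⊆ ⋃ g₀ ∈ (G : Set (Fin r → ℤ)), latticeCone (G.erase g₀) := by
        rintro x ⟨c, hc, rfl⟩
        set P := G.filter (fun g => 0 < lam g) with hP
        have hPne : P.Nonempty := ⟨glam, Finset.mem_filter.2 ⟨hglam, hlampos⟩⟩
        obtain ⟨g₀, hg₀P, hg₀min⟩ := Finset.exists_min_image P (fun g => c g / lam g) hPne
        have hg₀G : g₀ ∈ G := (Finset.mem_filter.1 hg₀P).1
        have hlg₀ : 0 < lam g₀ := (Finset.mem_filter.1 hg₀P).2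
        set t := c g₀ / lam g₀ with ht
        have ht0 : 0 ≤ t := div_nonneg (hc g₀) hlg₀.le
        apply Set.mem_biUnion (show g₀ ∈ (G : Set (Fin r → ℤ)) from hg₀G)
        refine ⟨fun g => if g ∈ G.erase g₀ then c g - t * lam g else 0, fun g => ?_, ?_⟩
        · dsimp only
          by_cases hg : g ∈ G.erase g₀
          · rw [if_pos hg]
            have hgG : g ∈ G := Finset.mem_of_mem_erase hg
            by_cases hl : 0 < lam g
            · have hle : t ≤ c g / lam g := hg₀min g (Finset.mem_filter.2 ⟨hgG, hl⟩)
              rw [le_div_iff₀ hl] at hle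
              linarith
            · push_neg at hl
              nlinarith [hc g]
          · rw [if_neg hg]
        · have e1 : ∑ g ∈ G.erase g₀, (if g ∈ G.erase g₀ then c g - t * lam g else 0) • intVec g
              = ∑ g ∈ G.erase g₀, (c g - t * lam g) • intVec g :=
            Finset.sum_congr rfl fun g hg => by rw [if_pos hg]
          have hzero : (c g₀ - t * lam g₀) • intVec g₀ = 0 := by
            rw [ht, div_mul_cancel₀ _ hlg₀.ne', sub_self, zero_smul]
          have e2 : ∑ g ∈ G.erase g₀, (c g - t * lam g) • intVec g
              = ∑ g ∈ G, (c g - t * lam g) • intVec g :=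
            Finset.sum_erase _ hzero
          have e3 : ∑ g ∈ G, (c g - t * lam g) • intVec g
              = (∑ g ∈ G, c g • intVec g) - t • ∑ g ∈ G, lam g • intVec g := by
            rw [Finset.smul_sum, ← Finset.sum_sub_distrib]
            exact Finset.sum_congr rfl fun g _ => by module
          dsimp only
          rw [e1, e2, e3, hlsum, smul_zero, sub_zero]
      have hcover : latticeCone G = ⋃ g₀ ∈ (G : Set (Fin r → ℤ)), latticeCone (G.erase g₀) :=
        Set.Subset.antisymm hsubset (Set.iUnion₂_subset fun g₀ _ =>
          latticeCone_mono (Finset.erase_subset _ _))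
      rw [hcover]
      exact (G.finite_toSet).isClosed_biUnion fun g₀ hg₀ =>
        ih _ (Finset.erase_ssubset hg₀)

end DPart


section EPart
variable {I : Type*} [Fintype I] [LinearOrder I] {r : ℕ}

lemma latticeCone_union (A B : Finset (Fin r → ℤ)) :
    latticeCone (A ∪ B) = latticeCone A + latticeCone B := by
  classical
  ext x
  constructor
  · rintro ⟨c, hc, rfl⟩
    refine ⟨∑ g ∈ A, c g • intVec g, ⟨c, hc, rfl⟩,
      ∑ g ∈ B \ A, c g • intVec g, ⟨fun g => if g ∈ B \ A then c g else 0, fun g => ?_, ?_⟩, ?_⟩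
    · dsimp only; split_ifs; exacts [hc g, le_rfl]
    · have hco : ∀ g ∈ B, (if g ∈ B \ A then c g else 0) • intVec g
          = if g ∈ B \ A then c g • intVec g else 0 := by
        intro g _; split_ifs; exacts [rfl, zero_smul _ _]
      rw [Finset.sum_congr rfl hco, Finset.sum_ite_mem,
        Finset.inter_eq_right.2 (Finset.sdiff_subset)]
    · show (∑ g ∈ A, c g • intVec g) + (∑ g ∈ B \ A, c g • intVec g)
        = ∑ g ∈ A ∪ B, c g • intVec g
      rw [← Finset.sum_union (Finset.disjoint_sdiff), Finset.union_sdiff_self_eq_union]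
  · rintro ⟨u, ⟨c, hc, rfl⟩, w, ⟨d, hd, rfl⟩, rfl⟩
    refine ⟨fun g => (if g ∈ A then c g else 0) + (if g ∈ B then d g else 0), fun g => ?_, ?_⟩
    · dsimp only
      have h1 : (0:ℝ) ≤ if g ∈ A then c g else 0 := by split_ifs; exacts [hc g, le_rfl]
      have h2 : (0:ℝ) ≤ if g ∈ B then d g else 0 := by split_ifs; exacts [hd g, le_rfl]
      linarith
    · have hco : ∀ g ∈ A ∪ B,
          ((if g ∈ A then c g else 0) + (if g ∈ B then d g else 0)) • intVec g
          = (if g ∈ A then c g • intVec g else 0) + (if g ∈ B then d g • intVec g else 0) := by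
        intro g _
        rw [add_smul]
        congr 1 <;> (split_ifs; exacts [rfl, zero_smul _ _])
      rw [Finset.sum_congr rfl hco, Finset.sum_add_distrib,
        Finset.sum_ite_mem, Finset.sum_ite_mem,
        Finset.inter_eq_right.2 (Finset.subset_union_left),
        Finset.inter_eq_right.2 (Finset.subset_union_right)]

lemma mem_latticeCone_singleton {g : Fin r → ℤ} {y : Fin r → ℝ} :
    y ∈ latticeCone {g} ↔ ∃ t : ℝ, 0 ≤ t ∧ y = t • intVec g := by
  constructor
  · rintro ⟨c, hc, rfl⟩
    exact ⟨c g, hc g, by rw [Finset.sum_singleton]⟩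
  · rintro ⟨t, ht, rfl⟩
    exact ⟨fun _ => t, fun _ => ht, by rw [Finset.sum_singleton]⟩

lemma mem_add_latticeCone_insert {A : Set (Fin r → ℝ)} {g : Fin r → ℤ}
    {G : Finset (Fin r → ℤ)} {x : Fin r → ℝ} :
    x ∈ A + latticeCone (insert g G) ↔
      ∃ t : ℝ, 0 ≤ t ∧ x - t • intVec g ∈ A + latticeCone G := by
  have h1 : (insert g G) = G ∪ {g} := by
    ext a; simp [or_comm]
  rw [h1, latticeCone_union, ← add_assoc]
  constructor
  · rintro ⟨u, hu, w, hw, rfl⟩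
    obtain ⟨t, ht, rfl⟩ := mem_latticeCone_singleton.1 hw
    exact ⟨t, ht, by simpa using hu⟩
  · rintro ⟨t, ht, hmem⟩
    refine ⟨x - t • intVec g, hmem, t • intVec g, mem_latticeCone_singleton.2 ⟨t, ht, rfl⟩, ?_⟩
    module

lemma isClosed_poly_add {A : Set (Fin r → ℝ)} {G₀ : Finset (Fin r → ℤ)}
    (h : A = ∅ ∨ IsLatticePolyhedron G₀ A) (G : Finset (Fin r → ℤ)) :
    IsClosed (A + latticeCone G) := by
  rcases h with h | ⟨S, _, rfl⟩
  · rw [h, Set.empty_add]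
    exact isClosed_empty
  · rw [add_assoc, ← latticeCone_union]
    exact IsClosed.add_left_of_isCompact (isClosed_latticeCone _)
      ((S.finite_toSet.image intVec).isCompact_convexHull (𝕜 := ℝ))

lemma convex_poly_add {A : Set (Fin r → ℝ)} {G₀ : Finset (Fin r → ℤ)}
    (h : A = ∅ ∨ IsLatticePolyhedron G₀ A) (G : Finset (Fin r → ℤ)) :
    Convex ℝ (A + latticeCone G) := by
  rcases h with h | ⟨S, _, rfl⟩
  · rw [h, Set.empty_add]
    exact convex_empty
  · exact Convex.add (Convex.add (convex_convexHull ℝ _) (convex_latticeCone _))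
      (convex_latticeCone _)

lemma familyFunctor_anti {α : Type*} {nab : I → Set α} {J : Finset I} {i : I} (hi : i ∈ J) :
    familyFunctor nab J ⊆ familyFunctor nab (J.erase i) := by
  classical
  have hJne : J ≠ ∅ := Finset.ne_empty_of_mem hi
  by_cases h : J.erase i = ∅
  · rw [familyFunctor, familyFunctor, if_neg hJne, if_pos h]
    intro x hx
    have hxi : x ∈ nab i := by
      exact Set.mem_iInter₂.1 hx i hi
    exact Set.mem_iUnion.2 ⟨i, hxi⟩
  · rw [familyFunctor, familyFunctor, if_neg hJne, if_neg h]
    intro x hx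
    rw [Set.mem_iInter₂] at hx ⊢
    intro j hj
    exact hx j (Finset.mem_of_mem_erase hj)

end EPart


section FPart
variable {I : Type*} [Fintype I] [LinearOrder I]

theorem AEx_family {r : ℕ} (G₀ : Finset (Fin r → ℤ)) (nab : I → Set (Fin r → ℝ))
    (hunion : IsLatticePolyhedron G₀ (⋃ i, nab i))
    (hinter : ∀ J : Finset I, J.Nonempty →
      (⋂ i ∈ J, nab i) = ∅ ∨ IsLatticePolyhedron G₀ (⋂ i ∈ J, nab i)) :
    ∀ (G : Finset (Fin r → ℤ)) (m : Fin r → ℝ),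
      AEx (fun J => m ∈ familyFunctor nab J + latticeCone G) := by
  classical
  have hpoly : ∀ J : Finset I, familyFunctor nab J = ∅ ∨
      IsLatticePolyhedron G₀ (familyFunctor nab J) := by
    intro J
    by_cases hJ : J = ∅
    · right; rw [familyFunctor, if_pos hJ]; exact hunion
    · rw [familyFunctor, if_neg hJ]
      exact hinter J (Finset.nonempty_iff_ne_empty.2 hJ)
  have hDCl : ∀ (G : Finset (Fin r → ℤ)) (m' : Fin r → ℝ),
      DCl (fun J => m' ∈ familyFunctor nab J + latticeCone G) := by
    intro G m' J i hJ hi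
    exact Set.add_subset_add_right (familyFunctor_anti hi) hJ
  intro G
  induction G using Finset.induction_on with
  | empty =>
    intro m
    have hcone : latticeCone (∅ : Finset (Fin r → ℤ)) = 0 := by
      ext x
      constructor
      · rintro ⟨c, hc, rfl⟩; simp
      · intro hx
        refine ⟨0, fun g => le_rfl, ?_⟩
        simp only [Finset.sum_empty]
        simpa using hx
    by_cases hT : (Finset.univ.filter (fun i => m ∈ nab i)).Nonempty
    · apply AEx_congr ?_ (AEx_simplex _ hT)
      intro J
      rw [hcone, add_zero]
      by_cases hJ : J = ∅
      · subst hJ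
        rw [familyFunctor, if_pos rfl]
        constructor
        · intro _
          obtain ⟨i, hi⟩ := hT
          exact Set.mem_iUnion.2 ⟨i, (Finset.mem_filter.1 hi).2⟩
        · intro _; exact Finset.empty_subset _
      · rw [familyFunctor, if_neg hJ]
        constructor
        · intro hsub
          exact Set.mem_iInter₂.2 fun i hi => (Finset.mem_filter.1 (hsub hi)).2
        · intro hmem i hi
          exact Finset.mem_filter.2 ⟨Finset.mem_univ i, Set.mem_iInter₂.1 hmem i hi⟩
    · apply AEx_congr ?_ AEx_false
      intro J
      rw [hcone, add_zero]
      constructor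
      · exact False.elim
      · intro hmem
        apply hT
        by_cases hJ : J = ∅
        · subst hJ
          rw [familyFunctor, if_pos rfl] at hmem
          obtain ⟨i, hi⟩ := Set.mem_iUnion.1 hmem
          exact ⟨i, Finset.mem_filter.2 ⟨Finset.mem_univ i, hi⟩⟩
        · obtain ⟨i, hi⟩ := Finset.nonempty_iff_ne_empty.2 hJ
          rw [familyFunctor, if_neg hJ] at hmem
          exact ⟨i, Finset.mem_filter.2 ⟨Finset.mem_univ i, Set.mem_iInter₂.1 hmem i hi⟩⟩
  | @insert g G hgG ih =>
    intro m
    set v : Fin r → ℝ := intVec g with hv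
    set P : ℝ → Finset I → Prop :=
      fun t J => m - t • v ∈ familyFunctor nab J + latticeCone G with hP
    set T : Finset I → Set ℝ := fun J => {t : ℝ | 0 ≤ t ∧ P t J} with hTdef
    have hTbdd : ∀ J, BddBelow (T J) := fun J => ⟨0, fun x hx => hx.1⟩
    have hTconv : ∀ J, Convex ℝ (T J) := by
      intro J t1 ht1 t2 ht2 a b ha hb hab
      constructor
      · have := add_nonneg (mul_nonneg ha ht1.1) (mul_nonneg hb ht2.1)
        simpa [smul_eq_mul] using this
      · have hmem := convex_poly_add (hpoly J) G ht1.2 ht2.2 ha hb hab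
        have heq : a • (m - t1 • v) + b • (m - t2 • v)
            = (a + b) • m - (a * t1 + b * t2) • v := by module
        rw [heq, hab, one_smul] at hmem
        simpa [hP, smul_eq_mul] using hmem
    have hTclosed : ∀ J, IsClosed (T J) := by
      intro J
      have h1 : IsClosed (familyFunctor nab J + latticeCone G) := isClosed_poly_add (hpoly J) G
      have h2 : Continuous fun t : ℝ => m - t • v := by fun_prop
      have he : T J = Set.Ici 0 ∩
          ((fun t : ℝ => m - t • v) ⁻¹' (familyFunctor nab J + latticeCone G)) := rfl
      rw [he]
      exact isClosed_Ici.inter (h1.preimage h2)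
    have hglob3 : ∀ (a b c : ℝ) (J : Finset I), a ≤ b → b ≤ c → P a J → P c J → P b J := by
      intro a b c J hab hbc hPa hPc
      rcases eq_or_lt_of_le (hab.trans hbc) with h | h
      · have hba : b = a := le_antisymm (h ▸ hbc) hab
        rwa [hba]
      · set θ := (c - b) / (c - a) with hθ
        have hca : 0 < c - a := by linarith
        have hθ0 : 0 ≤ θ := div_nonneg (by linarith) hca.le
        have hθ1 : 0 ≤ 1 - θ := by
          rw [sub_nonneg, hθ, div_le_one hca]; linarith
        have hmem := convex_poly_add (hpoly J) G hPa hPc hθ0 hθ1 (by ring)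
        have heq : θ • (m - a • v) + (1 - θ) • (m - c • v)
            = (θ + (1 - θ)) • m - (θ * a + (1 - θ) * c) • v := by module
        have hbeq : θ * a + (1 - θ) * c = b := by
          have hθca : θ * (c - a) = c - b := by rw [hθ]; exact div_mul_cancel₀ _ hca.ne'
          linarith
        rw [heq, show θ + (1 - θ) = (1:ℝ) by ring, one_smul, hbeq] at hmem
        exact hmem
    set E : Finset ℝ :=
      (Finset.univ.image fun J : Finset I => if (T J).Nonempty then sInf (T J) else 0) ∪
      (Finset.univ.image fun J : Finset I =>
        if (T J).Nonempty ∧ BddAbove (T J) then sSup (T J) else 0) with hE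
    have hEne : E.Nonempty := by
      refine Finset.Nonempty.mono Finset.subset_union_left ?_
      exact (Finset.univ_nonempty).image _
    have hInfMem : ∀ J, (T J).Nonempty → sInf (T J) ∈ T J :=
      fun J hne => (hTclosed J).csInf_mem hne (hTbdd J)
    have hSupMem : ∀ J, (T J).Nonempty → BddAbove (T J) → sSup (T J) ∈ T J :=
      fun J hne hbdd => (hTclosed J).csSup_mem hne hbdd
    have hInfE : ∀ J, (T J).Nonempty → sInf (T J) ∈ E := by
      intro J hne
      refine Finset.mem_union_left _ (Finset.mem_image.2 ⟨J, Finset.mem_univ J, ?_⟩)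
      rw [if_pos hne]
    have hSupE : ∀ J, (T J).Nonempty → BddAbove (T J) → sSup (T J) ∈ E := by
      intro J hne hbdd
      refine Finset.mem_union_right _ (Finset.mem_image.2 ⟨J, Finset.mem_univ J, ?_⟩)
      rw [if_pos ⟨hne, hbdd⟩]
    have hEnn : ∀ e ∈ E, (0:ℝ) ≤ e := by
      intro e he
      rcases Finset.mem_union.1 he with h | h
      · obtain ⟨J, _, rfl⟩ := Finset.mem_image.1 h
        split_ifs with hne
        · exact (hInfMem J hne).1
        · exact le_rfl
      · obtain ⟨J, _, rfl⟩ := Finset.mem_image.1 h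
        split_ifs with hne
        · exact (hSupMem J hne.1 hne.2).1
        · exact le_rfl
    set M : ℝ := E.max' hEne + 1 with hM
    set S : Finset ℝ := insert M E with hS
    have hES : E ⊆ S := Finset.subset_insert _ _
    have hSnn : ∀ s ∈ S, (0:ℝ) ≤ s := by
      intro s hs
      rcases Finset.mem_insert.1 hs with rfl | hs'
      · have := hEnn _ (E.max'_mem hEne)
        rw [hM]; linarith
      · exact hEnn _ hs'
    set l : List ℝ := S.sort (· ≤ ·) with hl
    have hsorted : l.Pairwise (· ≤ ·) := Finset.pairwise_sort _ _
    have hsortlt : l.Pairwise (· < ·) := List.sortedLT_iff_pairwise.1 (Finset.sortedLT_sort _)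
    have hmem_l : ∀ x : ℝ, x ∈ l ↔ x ∈ S := fun x => Finset.mem_sort _
    have hAEx_t : ∀ t ∈ l, AEx (P t) := fun t _ => ih (m - t • v)
    have hDCl_t : ∀ t ∈ l, DCl (P t) := fun t _ => hDCl G (m - t • v)
    have hchain : l.Chain' (fun a b => AEx (fun J => P a J ∧ P b J)) := by
      rw [List.Chain', List.isChain_iff_getElem]
      intro i hi
      set a := l.get ⟨i, by omega⟩ with ha
      set b := l.get ⟨i + 1, by omega⟩ with hb
      have haS : a ∈ S := (hmem_l a).1 (l.get_mem _)
      have hbS : b ∈ S := (hmem_l b).1 (l.get_mem _)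
      have haltb : a < b :=
        hsortlt.rel_get_of_lt (by rw [Fin.mk_lt_mk]; omega)
      have hnb : ∀ x ∈ S, x ≤ a ∨ b ≤ x := by
        intro x hx
        obtain ⟨j, hj⟩ := List.mem_iff_get.1 ((hmem_l x).2 hx)
        by_cases hij : (j : ℕ) ≤ i
        · left; rw [← hj]
          exact hsorted.rel_get_of_le (by rw [Fin.mk_le_mk] at *; omega)
        · right; rw [← hj]
          exact hsorted.rel_get_of_le (by rw [Fin.mk_le_mk] at *; omega)
      have ha0 : 0 ≤ a := hSnn a haS
      apply AEx_congr ?_ (ih (m - ((a + b) / 2) • v))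
      intro J
      constructor
      · intro hPmid
        have hmidT : (a + b) / 2 ∈ T J := ⟨by linarith, hPmid⟩
        have hTne : (T J).Nonempty := ⟨_, hmidT⟩
        have hinfT := hInfMem J hTne
        have hinfle : sInf (T J) ≤ (a + b) / 2 := csInf_le (hTbdd J) hmidT
        have hinfa : sInf (T J) ≤ a := by
          rcases hnb _ (hES (hInfE J hTne)) with h | h
          · exact h
          · linarith
        have haT : a ∈ T J :=
          (hTconv J).ordConnected.out hinfT hmidT ⟨hinfa, by linarith⟩
        have hbT : b ∈ T J := by
          by_cases hbdd : BddAbove (T J)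
          · have hsupT := hSupMem J hTne hbdd
            have hmidsup : (a + b) / 2 ≤ sSup (T J) := le_csSup hbdd hmidT
            have hbsup : b ≤ sSup (T J) := by
              rcases hnb _ (hES (hSupE J hTne hbdd)) with h | h
              · linarith
              · exact h
            exact (hTconv J).ordConnected.out hmidT hsupT ⟨by linarith, hbsup⟩
          · obtain ⟨z, hzT, hbz⟩ := (not_bddAbove_iff.1 hbdd) b
            exact (hTconv J).ordConnected.out hmidT hzT ⟨by linarith, hbz.le⟩
        exact ⟨haT.2, hbT.2⟩
      · rintro ⟨hPa, hPb⟩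
        exact hglob3 a ((a + b) / 2) b J (by linarith) (by linarith) hPa hPb
    have hmain := AEx_chain hglob3 l hsorted hAEx_t hDCl_t hchain
    apply AEx_congr ?_ hmain
    intro J
    constructor
    · rintro ⟨t, htl, hPt⟩
      exact mem_add_latticeCone_insert.2 ⟨t, hSnn t ((hmem_l t).1 htl), hPt⟩
    · intro hmem
      obtain ⟨t, ht0, hPt⟩ := mem_add_latticeCone_insert.1 hmem
      have hTne : (T J).Nonempty := ⟨t, ht0, hPt⟩
      exact ⟨sInf (T J), (hmem_l _).2 (hES (hInfE J hTne)), (hInfMem J hTne).2⟩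

end FPart


/-- the algebraic content of Theorem 8 of the paper, combining Lemma 4
and Proposition 7.  Let `(∇_i)_{i∈I}` be a finite family of lattice polyhedra in `ℝʳ`,
all with tail cone `C₀ = latticeCone G₀`, such that `∇ = ⋃_i ∇_i` is a lattice polyhedron
with tail cone `C₀` and every nonempty intersection `∇_{I'} = ⋂_{i∈I'} ∇_i` is a lattice
polyhedron with tail cone `C₀`; set `F(∅) := ∇` and `F(I') := ∇_{I'}`.  Then for every
convex cone `C = latticeCone G` generated with nonnegative real coefficients by a finite
subset `G` of `ℤʳ` and every `m ∈ ℝʳ`, the evaluation subcomplex `C^{F^C}_•(m)` of the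
functor `F^C(I') := F(I') + C` is exact. -/
theorem evalExact_family_add_cone {r : ℕ} (G₀ : Finset (Fin r → ℤ))
    (nab : I → Set (Fin r → ℝ))
    (hnab : ∀ i, IsLatticePolyhedron G₀ (nab i))
    (hunion : IsLatticePolyhedron G₀ (⋃ i, nab i))
    (hinter : ∀ J : Finset I, J.Nonempty →
      (⋂ i ∈ J, nab i) = ∅ ∨ IsLatticePolyhedron G₀ (⋂ i ∈ J, nab i)) :
    ∀ (G : Finset (Fin r → ℤ)) (m : Fin r → ℝ),
      evalExact (fun J => familyFunctor nab J + latticeCone G) m := by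
  intro G m
  exact AEx_family G₀ nab hunion hinter G m

end
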